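/- arXiv:1607.05712 — 2 statements merged into one kernel-verified Lean document; each statement's English description precedes it below -/
import Mathlib

section
/- Let θ₁,…,θ_s ∈ ℂ all of modulus 1, let 0 < δ < 1 and δ̄ = 2δ/(1+δ). Define q̄(z) = Π_{i=1}^s (z - θ_i)/(δz - θ_i). Then for every z ∈ ℂ with |z| ≤ 1/δ̄, one has |q̄(z)| ≤ δ^{-s}. -/
/-- For `θ₁,…,θ_s` of modulus 1, `0 < δ < 1`, `δ̄ = 2δ/(1+δ)`, the function
`q̄(z) = Π (z-θᵢ)/(δz-θᵢ)` satisfies `|q̄(z)| ≤ δ^{-s}` on the disc `|z| ≤ 1/δ̄`. -/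
theorem stmt6 (s : ℕ) (θ : Fin s → ℂ) (hθ : ∀ i, ‖θ i‖ = 1) (δ : ℝ)
    (h0 : 0 < δ) (h1 : δ < 1) (z : ℂ) (hz : ‖z‖ ≤ 1 / (2 * δ / (1 + δ))) :
    ‖∏ i, (z - θ i) / ((δ : ℂ) * z - θ i)‖ ≤ (1 / δ) ^ s := by
  have h1δ : (0:ℝ) < 1 + δ := by linarith
  have hzb : ‖z‖ ≤ (1 + δ) / (2 * δ) := by
    rwa [one_div, inv_div] at hz
  have key : ∀ i, ‖(z - θ i) / ((δ : ℂ) * z - θ i)‖ ≤ 1 / δ := by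
    intro i
    have hre : (z * (starRingEnd ℂ) (θ i)).re ≤ (1 + δ) / (2 * δ) := by
      refine le_trans (Complex.re_le_norm _) ?_
      rw [norm_mul, Complex.norm_conj, hθ, mul_one]
      exact hzb
    have hnθ : Complex.normSq (θ i) = 1 := by
      rw [← Complex.sq_norm, hθ]; norm_num
    have hden : (1 - δ) / 2 ≤ ‖(δ : ℂ) * z - θ i‖ := by
      have h2 : ‖θ i‖ - ‖(δ:ℂ) * z‖ ≤
          ‖(δ:ℂ) * z - θ i‖ := by
        have h3 := norm_add_le (θ i - (δ:ℂ) * z) ((δ:ℂ) * z)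
        rw [sub_add_cancel, norm_sub_rev] at h3
        linarith
      have hδz : ‖(δ:ℂ) * z‖ ≤ (1 + δ) / 2 := by
        rw [norm_mul, Complex.norm_real, Real.norm_of_nonneg h0.le]
        calc δ * ‖z‖ ≤ δ * ((1 + δ) / (2 * δ)) := by
              exact mul_le_mul_of_nonneg_left hzb h0.le
          _ = (1 + δ) / 2 := by field_simp
      rw [hθ] at h2
      linarith
    have hdenpos : 0 < ‖(δ : ℂ) * z - θ i‖ := by linarith
    -- squared inequality
    have hsq : (δ * ‖z - θ i‖) ^ 2 ≤ ‖(δ : ℂ) * z - θ i‖ ^ 2 := by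
      rw [mul_pow, Complex.sq_norm, Complex.sq_norm, Complex.normSq_sub, Complex.normSq_sub]
      rw [Complex.normSq_mul, Complex.normSq_ofReal, hnθ]
      have hre2 : ((δ:ℂ) * z * (starRingEnd ℂ) (θ i)).re = δ * (z * (starRingEnd ℂ) (θ i)).re := by
        rw [mul_assoc, Complex.re_ofReal_mul]
      rw [hre2]
      have hns : 0 ≤ Complex.normSq z := Complex.normSq_nonneg z
      have h2δ : 2 * δ * (z * (starRingEnd ℂ) (θ i)).re ≤ 1 + δ := by
        have := mul_le_mul_of_nonneg_left hre (by positivity : (0:ℝ) ≤ 2 * δ)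
        calc 2 * δ * (z * (starRingEnd ℂ) (θ i)).re ≤ 2 * δ * ((1 + δ) / (2 * δ)) := this
          _ = 1 + δ := by field_simp
      nlinarith [mul_nonneg (by linarith : (0:ℝ) ≤ 1 - δ)
        (by linarith : (0:ℝ) ≤ 1 + δ - 2 * δ * (z * (starRingEnd ℂ) (θ i)).re)]
    have habs : δ * ‖z - θ i‖ ≤ ‖(δ : ℂ) * z - θ i‖ := by
      nlinarith [mul_nonneg h0.le (norm_nonneg (z - θ i)), hdenpos]
    rw [norm_div, div_le_div_iff₀ hdenpos h0]
    linarith [habs]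
  calc ‖∏ i, (z - θ i) / ((δ : ℂ) * z - θ i)‖
      = ∏ i, ‖(z - θ i) / ((δ : ℂ) * z - θ i)‖ := norm_prod _ _
    _ ≤ ∏ _i : Fin s, (1 / δ) := Finset.prod_le_prod (fun i _ => norm_nonneg _)
        (fun i _ => key i)
    _ = (1 / δ) ^ s := by simp
end

section
/- For integers m ≥ 0, n ≥ 1 and any ε ∈ [0, π], the sum S_{m,n}(ε) = Σ_{k=0}^{m+n} |D_m(πk/(m+n+1) − ε)| satisfies S_{m,n}(ε) ≤ 2(m+1) + (m+n+1)·(ln((m+n+1)/2) + 1), where D_m is the Dirichlet kernel D_m(x) = sin((m+1)x)/sin(x) for x ∉ πℤ and D_m(x) = m+1 otherwise. -/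
open Classical

/-- The Dirichlet kernel `D_m(x) = sin((m+1)x)/sin(x)` for `x ∉ πℤ`, `D_m(x) = m+1` else. -/

noncomputable def dirich (m : ℕ) (x : ℝ) : ℝ :=
  if ∃ l : ℤ, x = l * Real.pi then (m + 1 : ℝ)
  else Real.sin ((m + 1) * x) / Real.sin x

lemma abs_sin_nat_mul_le (n : ℕ) (x : ℝ) : |Real.sin (n * x)| ≤ n * |Real.sin x| := by
  induction n with
  | zero => simp
  | succ n ih =>
    have h : ((n:ℝ)+1) * x = n * x + x := by ring
    push_cast
    rw [h, Real.sin_add]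
    have h1 : |Real.sin (n*x) * Real.cos x| ≤ (n:ℝ) * |Real.sin x| := by
      rw [abs_mul]
      exact le_trans (mul_le_of_le_one_right (abs_nonneg _) (Real.abs_cos_le_one x)) ih
    have h2 : |Real.cos (n*x) * Real.sin x| ≤ |Real.sin x| := by
      rw [abs_mul]
      exact mul_le_of_le_one_left (abs_nonneg _) (Real.abs_cos_le_one _)
    calc |Real.sin (n*x) * Real.cos x + Real.cos (n*x) * Real.sin x|
        ≤ |Real.sin (n*x) * Real.cos x| + |Real.cos (n*x) * Real.sin x| := abs_add_le _ _
      _ ≤ (n:ℝ) * |Real.sin x| + |Real.sin x| := add_le_add h1 h2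
      _ = ((n:ℝ)+1) * |Real.sin x| := by ring

lemma abs_dirich_le (m : ℕ) (x : ℝ) : |dirich m x| ≤ m + 1 := by
  unfold dirich
  split_ifs with h
  · rw [abs_of_nonneg (by positivity)]
  · have hs : Real.sin x ≠ 0 := by
      intro hz
      rcases Real.sin_eq_zero_iff.mp hz with ⟨l, hl⟩
      exact h ⟨l, hl.symm⟩
    rw [abs_div]
    rw [div_le_iff₀ (abs_pos.mpr hs)]
    have := abs_sin_nat_mul_le (m+1) x
    push_cast at this ⊢
    linarith

lemma dirich_bound (m : ℕ) (x : ℝ) (l : ℤ) (s : ℝ) (hs : 0 < s)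
    (h1 : s ≤ x - l * Real.pi) (h2 : s ≤ Real.pi - (x - l * Real.pi)) :
    |dirich m x| ≤ Real.pi / (2 * s) := by
  have hpi := Real.pi_pos
  set t := x - l * Real.pi with ht
  have ht0 : 0 < t := lt_of_lt_of_le hs h1
  have htpi : t < Real.pi := by linarith
  have hnm : ¬ ∃ l' : ℤ, x = l' * Real.pi := by
    rintro ⟨l', rfl⟩
    have : t = (l' - l) * Real.pi := by rw [ht]; push_cast; ring
    set u : ℝ := (l':ℝ) - l with hu
    have h01 : (0:ℝ) < u * Real.pi := by rw [← this]; exact ht0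
    have h02 : u * Real.pi < Real.pi := by rw [← this]; exact htpi
    have hl1 : (0:ℝ) < u := by nlinarith
    have hl2 : u < 1 := by nlinarith
    have e1 : (0:ℤ) < l' - l := by rw [hu] at hl1; exact_mod_cast hl1
    have e2 : (l' - l : ℤ) < 1 := by rw [hu] at hl2; exact_mod_cast hl2
    omega
  -- sin t ≥ 2/π * s
  have hmin : 2 / Real.pi * s ≤ Real.sin t := by
    rcases le_or_gt t (Real.pi / 2) with hc | hc
    · exact le_trans (by gcongr) (Real.mul_le_sin ht0.le hc)
    · have : 2 / Real.pi * s ≤ Real.sin (Real.pi - t) := by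
        apply le_trans (by gcongr) (Real.mul_le_sin (by linarith) (by linarith))
      rwa [Real.sin_pi_sub] at this
  have hsint : |Real.sin x| = Real.sin t := by
    have : x = t + l * Real.pi := by rw [ht]; ring
    rw [this, Real.sin_add_int_mul_pi, abs_mul, abs_of_nonneg
      (Real.sin_nonneg_of_nonneg_of_le_pi ht0.le htpi.le)]
    have habs : |((-1:ℝ)) ^ l| = 1 := by
      rcases l.even_or_odd with ⟨c, hc⟩ | ⟨c, hc⟩ <;> subst hc
      · rw [show c + c = 2 * c by ring, zpow_mul]
        norm_num
      · rw [zpow_add₀ (by norm_num : (-1:ℝ) ≠ 0), zpow_mul]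
        norm_num
    rw [habs, one_mul]
  have hsintpos : 0 < Real.sin t := lt_of_lt_of_le (by positivity) hmin
  unfold dirich
  rw [if_neg hnm, abs_div, hsint, div_le_div_iff₀ hsintpos (by positivity)]
  have h2s : 2 * s ≤ Real.pi * Real.sin t := by
    have h3 := mul_le_mul_of_nonneg_left hmin hpi.le
    have h4 : Real.pi * (2 / Real.pi * s) = 2 * s := by field_simp
    linarith [h4 ▸ h3]
  calc |Real.sin ((↑m+1) * x)| * (2 * s) ≤ 1 * (2 * s) := by
        have := Real.abs_sin_le_one ((↑m+1) * x)
        nlinarith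
    _ = 2 * s := one_mul _
    _ ≤ Real.pi * Real.sin t := h2s

lemma sum_ind (M N : ℕ) (h : M < N) :
    ∑ a ∈ Finset.range N, (if 1 ≤ a ∧ a ≤ M then ((a:ℝ))⁻¹ else 0)
      = (harmonic M : ℝ) := by
  have hsub : Finset.range (M+1) ⊆ Finset.range N := Finset.range_subset_range.mpr h
  rw [← Finset.sum_subset hsub (by
    intro x hx hnx
    rw [Finset.mem_range] at hx hnx
    rw [if_neg (by omega)])]
  rw [Finset.sum_range_succ', if_neg (by omega), add_zero, harmonic, Rat.cast_sum]
  apply Finset.sum_congr rfl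
  intro i hi
  rw [Finset.mem_range] at hi
  rw [if_pos (by omega)]
  push_cast
  ring

/-- For `m ≥ 0`, `n ≥ 1`, `ε ∈ [0, π]`:
`S_{m,n}(ε) = Σ_{k=0}^{m+n} |D_m(πk/(m+n+1) − ε)| ≤ 2(m+1) + (m+n+1)(ln((m+n+1)/2)+1)`. -/
theorem stmt11 (m n : ℕ) (hn : 1 ≤ n) (ε : ℝ) (h0 : 0 ≤ ε) (h1 : ε ≤ Real.pi) :
    ∑ k ∈ Finset.range (m + n + 1),
        |dirich m (Real.pi * k / (m + n + 1) - ε)|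
      ≤ 2 * (m + 1) + (m + n + 1) * (Real.log ((m + n + 1) / 2) + 1) := by
  have hpi := Real.pi_pos
  set N := m + n + 1 with hNdef
  have hN2 : 2 ≤ N := by omega
  have hNR : (0:ℝ) < (N:ℝ) := by positivity
  have hNcast : ((N:ℕ):ℝ) = (m:ℝ) + (n:ℝ) + 1 := by rw [hNdef]; push_cast; ring
  rw [← hNcast]
  clear_value N
  set j0 := ⌈(N:ℝ) * ε / Real.pi⌉₊ with hj0def
  have hj0N : j0 ≤ N := by
    rw [hj0def]
    exact Nat.ceil_le.mpr (by rw [div_le_iff₀ hpi]; nlinarith)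
  have hub : ε ≤ Real.pi * j0 / N := by
    have h := Nat.le_ceil ((N:ℝ) * ε / Real.pi)
    rw [← hj0def, div_le_iff₀ hpi] at h
    rw [le_div_iff₀ hNR]
    nlinarith
  have hlb : Real.pi * ((j0:ℝ) - 1) / N ≤ ε := by
    have h := Nat.ceil_lt_add_one (show (0:ℝ) ≤ (N:ℝ)*ε/Real.pi by positivity)
    rw [← hj0def] at h
    have h2 : (j0:ℝ) - 1 < (N:ℝ)*ε/Real.pi := by linarith
    rw [lt_div_iff₀ hpi] at h2
    rw [div_le_iff₀ hNR]
    nlinarith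
  clear_value j0
  set c : ℕ → ℕ := fun a => min a (N - 1 - a) with hc
  set F : ℕ → ℝ := fun a => if a = 0 ∨ a = N - 1 then (m+1:ℝ) else (N:ℝ)/(2 * c a) with hF
  -- Step 1
  have key : ∀ k ∈ Finset.range N,
      |dirich m (Real.pi * k / N - ε)| ≤ F ((k + N - j0) % N) := by
    intro k hk
    rw [Finset.mem_range] at hk
    set a := (k + N - j0) % N with ha
    by_cases hbad : a = 0 ∨ a = N - 1
    · rw [hF]
      simp only
      rw [if_pos hbad]
      exact abs_dirich_le m _
    · push_neg at hbad
      have haN : a < N := Nat.mod_lt _ (by omega)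
      have ha1 : 1 ≤ a := by omega
      have ha2 : a + 2 ≤ N := by omega
      obtain ⟨q, hq⟩ : ∃ q, k + N - j0 = q * N + a :=
        ⟨(k + N - j0)/N, by rw [ha, mul_comm]; exact (Nat.div_add_mod _ _).symm⟩
      set l : ℤ := (q:ℤ) - 1 with hl
      have hZ : (k:ℝ) + N = q * N + a + j0 := by
        have h3 : k + N = q * N + a + j0 := by omega
        have h4 : ((k + N : ℕ):ℝ) = ((q * N + a + j0 : ℕ):ℝ) := by rw [h3]
        push_cast at h4
        linarith
      have hxl : Real.pi * k / N - ε - l * Real.pi = Real.pi * ((a:ℝ) + j0) / N - ε := by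
        rw [hl]
        field_simp
        push_cast
        linear_combination Real.pi * hZ
      have hca1 : 1 ≤ c a := by rw [hc]; simp only [le_min_iff]; omega
      have hcaR : (1:ℝ) ≤ (c a : ℝ) := by exact_mod_cast hca1
      set s := Real.pi * (c a : ℝ) / N with hs
      have hs0 : 0 < s := by
        rw [hs]; apply div_pos (mul_pos hpi (by linarith)) hNR
      have hcaa : (c a : ℝ) ≤ (a : ℝ) := by exact_mod_cast (min_le_left a (N-1-a) : c a ≤ a)
      have hcab : (c a : ℝ) ≤ (N:ℝ) - 1 - a := by
        have h5 : c a ≤ N - 1 - a := min_le_right _ _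
        have h6 : ((N - 1 - a : ℕ):ℝ) = (N:ℝ) - 1 - a := by
          rw [Nat.cast_sub (by omega), Nat.cast_sub (by omega)]
          norm_num
        rw [← h6]
        exact_mod_cast h5
      have hta : s ≤ Real.pi * k / N - ε - l * Real.pi := by
        rw [hxl, hs]
        have e1 : Real.pi * ((a:ℝ)+j0)/N = Real.pi * a / N + Real.pi * j0 / N := by ring
        have e2 : Real.pi * (c a : ℝ) / N ≤ Real.pi * a / N := by gcongr
        linarith
      have htb : s ≤ Real.pi - (Real.pi * k / N - ε - l * Real.pi) := by
        rw [hxl, hs]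
        have e1 : Real.pi * ((a:ℝ)+j0)/N = Real.pi * ((a:ℝ)+1) / N + Real.pi * ((j0:ℝ)-1)/N := by
          ring
        have e2 : Real.pi * (c a : ℝ) / N ≤ Real.pi * ((N:ℝ) - 1 - a) / N := by gcongr
        have e3 : Real.pi * ((N:ℝ)-1-(a:ℝ))/N = Real.pi - Real.pi*((a:ℝ)+1)/N := by
          field_simp
          ring
        linarith
      have hmain := dirich_bound m (Real.pi * k / N - ε) l s hs0 hta htb
      have heq : Real.pi / (2 * s) = (N:ℝ) / (2 * c a) := by
        rw [hs]
        rw [div_eq_div_iff (by positivity) (by positivity)]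
        field_simp
      rw [hF]
      simp only
      rw [if_neg (by push_neg; exact hbad)]
      rw [← heq]
      exact hmain
  -- Step 2
  have hbij : ∑ k ∈ Finset.range N, F ((k + N - j0) % N) = ∑ a ∈ Finset.range N, F a := by
    apply Finset.sum_nbij' (i := fun k => (k + N - j0) % N) (j := fun a => (a + j0) % N)
    · intro k hk
      rw [Finset.mem_range] at hk ⊢
      exact Nat.mod_lt _ (by omega)
    · intro a0 ha0
      rw [Finset.mem_range] at ha0 ⊢
      exact Nat.mod_lt _ (by omega)
    · intro k hk
      rw [Finset.mem_range] at hk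
      show ((k + N - j0) % N + j0) % N = k
      rw [Nat.mod_add_mod, show k + N - j0 + j0 = k + N from by omega, Nat.add_mod_right,
        Nat.mod_eq_of_lt hk]
    · intro a0 ha0
      rw [Finset.mem_range] at ha0
      show ((a0 + j0) % N + N - j0) % N = a0
      rw [show (a0 + j0) % N + N - j0 = (a0 + j0) % N + (N - j0) from by omega,
        Nat.mod_add_mod, show a0 + j0 + (N - j0) = a0 + N from by omega, Nat.add_mod_right,
        Nat.mod_eq_of_lt ha0]
    · intro k _
      rfl
  -- Step 3
  set M := (N-1)/2 with hM
  have hMN : M < N := by omega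
  have hF_le : ∀ a ∈ Finset.range N, F a ≤
      (if a = 0 then (m+1:ℝ) else 0) + (if a = N-1 then (m+1:ℝ) else 0)
      + ((N:ℝ)/2) * ((if 1 ≤ a ∧ a ≤ M then ((a:ℝ))⁻¹ else 0)
          + (if 1 ≤ N-1-a ∧ N-1-a ≤ M then (((N-1-a:ℕ)):ℝ)⁻¹ else 0)) := by
    intro a ha
    rw [Finset.mem_range] at ha
    have hind1 : (0:ℝ) ≤ (if 1 ≤ a ∧ a ≤ M then ((a:ℝ))⁻¹ else 0) := by
      split_ifs <;> positivity
    have hind2 : (0:ℝ) ≤ (if 1 ≤ N-1-a ∧ N-1-a ≤ M then (((N-1-a:ℕ)):ℝ)⁻¹ else 0) := by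
      split_ifs <;> positivity
    by_cases hbad : a = 0 ∨ a = N - 1
    · rw [hF]
      simp only
      rw [if_pos hbad]
      rcases hbad with h | h
      · rw [if_pos h, if_neg (by omega)]
        nlinarith
      · rw [if_pos h, if_neg (by omega)]
        nlinarith
    · push_neg at hbad
      rw [hF]
      simp only
      rw [if_neg (by push_neg; exact hbad), if_neg hbad.1, if_neg hbad.2, zero_add, zero_add]
      have ha1 : 1 ≤ a := by omega
      have ha2 : a + 2 ≤ N := by omega
      have hca1 : 1 ≤ c a := by rw [hc]; simp only [le_min_iff]; omega
      have hcaR : (1:ℝ) ≤ (c a : ℝ) := by exact_mod_cast hca1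
      rw [div_mul_eq_div_div, div_eq_mul_inv]
      gcongr (N:ℝ)/2 * ?_
      rcases le_or_gt a (N - 1 - a) with hle | hlt
      · have hceq : c a = a := by rw [hc]; exact min_eq_left hle
        have haM : a ≤ M := by omega
        have e1 : (if 1 ≤ a ∧ a ≤ M then ((a:ℝ))⁻¹ else 0) = ((a:ℝ))⁻¹ := if_pos ⟨ha1, haM⟩
        rw [hceq, e1]
        linarith
      · have hceq : c a = N - 1 - a := by rw [hc]; exact min_eq_right hlt.le
        have hb1 : 1 ≤ N - 1 - a := by omega
        have hbM : N - 1 - a ≤ M := by omega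
        have e2 : (if 1 ≤ N-1-a ∧ N-1-a ≤ M then (((N-1-a:ℕ)):ℝ)⁻¹ else 0)
            = (((N-1-a:ℕ)):ℝ)⁻¹ := if_pos ⟨hb1, hbM⟩
        rw [hceq, e2]
        linarith
  have hsum1 : ∑ a ∈ Finset.range N, (if a = 0 then (m+1:ℝ) else 0) = (m+1:ℝ) := by
    rw [Finset.sum_ite_eq' (Finset.range N) 0 (fun _ => (m+1:ℝ)),
      if_pos (Finset.mem_range.mpr (by omega))]
  have hsum2 : ∑ a ∈ Finset.range N, (if a = N-1 then (m+1:ℝ) else 0) = (m+1:ℝ) := by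
    rw [Finset.sum_ite_eq' (Finset.range N) (N-1) (fun _ => (m+1:ℝ)),
      if_pos (Finset.mem_range.mpr (by omega))]
  have hsum3 : ∑ a ∈ Finset.range N, (if 1 ≤ a ∧ a ≤ M then ((a:ℝ))⁻¹ else 0)
      = (harmonic M : ℝ) := sum_ind M N hMN
  have hsum4 : ∑ a ∈ Finset.range N, (if 1 ≤ N-1-a ∧ N-1-a ≤ M then (((N-1-a:ℕ)):ℝ)⁻¹ else 0)
      = (harmonic M : ℝ) := by
    rw [← hsum3]
    apply Finset.sum_nbij' (i := fun a => N - 1 - a) (j := fun a => N - 1 - a)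
    · intro a0 ha0; rw [Finset.mem_range] at ha0 ⊢; omega
    · intro a0 ha0; rw [Finset.mem_range] at ha0 ⊢; omega
    · intro a0 ha0; rw [Finset.mem_range] at ha0; show N - 1 - (N - 1 - a0) = a0; omega
    · intro a0 ha0; rw [Finset.mem_range] at ha0; show N - 1 - (N - 1 - a0) = a0; omega
    · intro a0 _; rfl
  have hharm : (harmonic M : ℝ) ≤ 1 + Real.log ((N:ℝ)/2) := by
    by_cases hM0 : M = 0
    · rw [hM0]
      simp only [harmonic_zero, Rat.cast_zero]
      have : (0:ℝ) ≤ Real.log ((N:ℝ)/2) := by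
        apply Real.log_nonneg
        rw [le_div_iff₀ (by norm_num : (0:ℝ) < 2)]
        exact_mod_cast (by omega : 2 ≤ N)
      linarith
    · have h5 := harmonic_le_one_add_log M
      have h6 : Real.log M ≤ Real.log ((N:ℝ)/2) := by
        apply Real.log_le_log (by exact_mod_cast Nat.pos_of_ne_zero hM0)
        calc (M:ℝ) ≤ ((N-1:ℕ):ℝ)/2 := by
              rw [hM]; exact_mod_cast Nat.cast_div_le
          _ ≤ (N:ℝ)/2 := by
              have : ((N-1:ℕ):ℝ) ≤ (N:ℝ) := by exact_mod_cast Nat.sub_le N 1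
              linarith
      linarith
  -- assemble
  calc ∑ k ∈ Finset.range N, |dirich m (Real.pi * k / N - ε)|
      ≤ ∑ k ∈ Finset.range N, F ((k + N - j0) % N) := Finset.sum_le_sum key
    _ = ∑ a ∈ Finset.range N, F a := hbij
    _ ≤ ∑ a ∈ Finset.range N, ((if a = 0 then (m+1:ℝ) else 0) + (if a = N-1 then (m+1:ℝ) else 0)
        + ((N:ℝ)/2) * ((if 1 ≤ a ∧ a ≤ M then ((a:ℝ))⁻¹ else 0)
          + (if 1 ≤ N-1-a ∧ N-1-a ≤ M then (((N-1-a:ℕ)):ℝ)⁻¹ else 0))) :=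
        Finset.sum_le_sum hF_le
    _ = (m+1:ℝ) + (m+1:ℝ) + ((N:ℝ)/2) * ((harmonic M : ℝ) + (harmonic M : ℝ)) := by
        rw [Finset.sum_add_distrib, Finset.sum_add_distrib, hsum1, hsum2, ← Finset.mul_sum,
          Finset.sum_add_distrib, hsum3, hsum4]
    _ = 2*((m:ℝ)+1) + (N:ℝ) * (harmonic M : ℝ) := by ring
    _ ≤ 2*((m:ℝ)+1) + (N:ℝ) * (Real.log ((N:ℝ)/2) + 1) := by
        have := mul_le_mul_of_nonneg_left hharm hNR.le
        linarith
end
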